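/- arXiv:2001.01295 — 3 statements merged into one kernel-verified Lean document; each statement's English description precedes it below -/
import Mathlib

section
/- Define Li_1(x) = -log(1-x) and, for integers k ≥ 2, Li_k(x) = ∫₀^x Li_{k-1}(s)/s ds (for x ≤ 0 these integrals are well-defined). Set a_k = -Li_k(-1). Then for every integer d ≥ 2 and every real t ≥ 0, t^d/d! + Σ_{k=2}^d a_k t^{d-k}/(d-k)! ≤ -Li_d(-e^t) ≤ t^d/d! + (log 2) t^{d-1}/(d-1)! + Σ_{k=2}^d a_k t^{d-k}/(d-k)!. -/
open scoped Nat
open Set MeasureTheory intervalIntegral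

/-- The polylogarithm, defined recursively by `Li 1 x = -log (1 - x)` and
`Li (k+1) x = ∫ s in 0..x, Li k s / s`. -/
noncomputable def Li : ℕ → ℝ → ℝ
  | 0, _ => 0
  | 1, x => -Real.log (1 - x)
  | k + 2, x => ∫ s in (0:ℝ)..x, Li (k + 1) s / s


lemma Li_aux : ∀ k : ℕ, (∀ s : ℝ, s ≤ 0 → s ≤ Li k s ∧ Li k s ≤ 0) ∧
    ContinuousOn (Li k) (Set.Iic 0) := by
  intro k
  induction k using Nat.strong_induction_on with
  | _ k ih =>
  match k with
  | 0 => exact ⟨fun s hs => ⟨hs, le_rfl⟩, continuousOn_const⟩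
  | 1 =>
    constructor
    · intro s hs
      have h1 : (1:ℝ) ≤ 1 - s := by linarith
      constructor
      · have := Real.log_le_sub_one_of_pos (x := 1 - s) (by linarith)
        simp only [Li]; linarith
      · simp only [Li, neg_nonpos]
        exact Real.log_nonneg h1
    · simp only [Li]
      refine (Real.continuousOn_log.comp (by fun_prop) ?_).neg
      intro s hs
      simp only [Set.mem_Iic] at hs
      simp only [Set.mem_compl_iff, Set.mem_singleton_iff]
      intro h; linarith [h]
  | k + 2 =>
    obtain ⟨hbd, hcont⟩ := ih (k + 1) (by omega)
    set g : ℝ → ℝ := fun s => Li (k + 1) s / s with hg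
    have hLi : ∀ x : ℝ, Li (k + 2) x = ∫ s in (0:ℝ)..x, g s := fun x => rfl
    have hgb : ∀ s : ℝ, s < 0 → 0 ≤ g s ∧ g s ≤ 1 := by
      intro s hs
      obtain ⟨h1, h2⟩ := hbd s hs.le
      constructor
      · exact div_nonneg_of_nonpos h2 hs.le
      · rw [div_le_iff_of_neg hs]; linarith
    have hgb' : ∀ s : ℝ, s ≤ 0 → 0 ≤ g s ∧ g s ≤ 1 := by
      intro s hs
      rcases eq_or_lt_of_le hs with rfl | hs
      · simp [hg]
      · exact hgb s hs
    have hgcont : ContinuousOn g (Set.Iio 0) := by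
      apply ContinuousOn.div (hcont.mono Iio_subset_Iic_self) continuousOn_id
      intro s hs; exact ne_of_lt hs
    have hgint : ∀ x : ℝ, x ≤ 0 → IntervalIntegrable g volume x 0 := by
      intro x hx
      rw [intervalIntegrable_iff_integrableOn_Ioc_of_le hx]
      have h1 : IntegrableOn g (Set.Ioo x 0) := by
        apply Integrable.mono' (g := fun _ => (1:ℝ))
          (integrableOn_const measure_Ioo_lt_top.ne)
        · exact (hgcont.mono (fun s hs => hs.2)).aestronglyMeasurable measurableSet_Ioo
        · refine (ae_restrict_iff' measurableSet_Ioo).mpr (ae_of_all _ ?_)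
          intro s hs
          rw [Real.norm_eq_abs, abs_le]
          obtain ⟨h1, h2⟩ := hgb s hs.2
          constructor <;> linarith
      exact h1.congr_set_ae Ioo_ae_eq_Ioc.symm
    constructor
    · intro x hx
      have hint := hgint x hx
      have hnn : 0 ≤ ∫ s in x..(0:ℝ), g s := by
        apply intervalIntegral.integral_nonneg hx
        intro u hu; exact (hgb' u hu.2).1
      have hle : ‖∫ s in (0:ℝ)..x, g s‖ ≤ 1 * |x - 0| := by
        apply intervalIntegral.norm_integral_le_of_norm_le_const
        intro s hs
        rw [Set.uIoc_of_ge hx] at hs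
        rw [Real.norm_eq_abs, abs_le]
        obtain ⟨h1, h2⟩ := hgb' s hs.2
        constructor <;> linarith
      rw [hLi x, intervalIntegral.integral_symm]
      constructor
      · rw [intervalIntegral.integral_symm] at hle
        rw [norm_neg, Real.norm_eq_abs, abs_le] at hle
        have : |x - 0| = -x := by rw [abs_sub_comm]; simp [abs_of_nonpos hx]
        rw [this] at hle
        linarith [hle.2]
      · linarith
    · intro x hx
      have hx' : x ∈ Set.Iic (0:ℝ) := hx
      have hxle : x - 1 ≤ 0 := by simp only [Set.mem_Iic] at hx; linarith
      have hc : ContinuousOn (fun y => ∫ s in (0:ℝ)..y, g s) (Set.uIcc (x-1) 0) := by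
        apply intervalIntegral.continuousOn_primitive_interval' (hgint (x-1) hxle)
        rw [Set.uIcc_of_le hxle]; exact ⟨hxle, le_rfl⟩
      rw [Set.uIcc_of_le hxle] at hc
      have hmem : x ∈ Set.Icc (x-1) 0 := ⟨by linarith, hx⟩
      have := hc x hmem
      have h2 : ContinuousWithinAt (Li (k+2)) (Set.Icc (x-1) 0) x := by
        apply this.congr
        · intro y hy; exact (hLi y).symm
        · exact (hLi x).symm
      apply h2.mono_of_mem_nhdsWithin
      have : Set.Iic (0:ℝ) ∩ Set.Ioi (x-1) ⊆ Set.Icc (x-1) 0 := by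
        intro y hy; exact ⟨le_of_lt hy.2, hy.1⟩
      exact Filter.mem_of_superset (inter_mem_nhdsWithin _ (Ioi_mem_nhds (by linarith))) this


lemma Li_div_cont (k : ℕ) : ContinuousOn (fun s => Li k s / s) (Set.Iio 0) := by
  apply ContinuousOn.div ((Li_aux k).2.mono Iio_subset_Iic_self) continuousOn_id
  intro s hs; exact ne_of_lt hs

lemma Li_div_int (k : ℕ) {x : ℝ} (hx : x ≤ 0) :
    IntervalIntegrable (fun s => Li k s / s) volume x 0 := by
  rw [intervalIntegrable_iff_integrableOn_Ioc_of_le hx]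
  have h1 : IntegrableOn (fun s => Li k s / s) (Set.Ioo x 0) := by
    apply Integrable.mono' (g := fun _ => (1:ℝ))
      (integrableOn_const measure_Ioo_lt_top.ne)
    · exact ((Li_div_cont k).mono (fun s hs => hs.2)).aestronglyMeasurable measurableSet_Ioo
    · refine (ae_restrict_iff' measurableSet_Ioo).mpr (ae_of_all _ ?_)
      intro s hs
      obtain ⟨h1, h2⟩ := (Li_aux k).1 s hs.2.le
      rw [Real.norm_eq_abs, abs_le]
      have hs2 := hs.2
      constructor
      · have : 0 ≤ Li k s / s := div_nonneg_of_nonpos h2 hs2.le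
        linarith
      · rw [div_le_iff_of_neg hs2]; linarith
  exact h1.congr_set_ae Ioo_ae_eq_Ioc.symm

lemma Li_rec (k : ℕ) (t : ℝ) :
    Li (k+2) (-Real.exp t) = Li (k+2) (-1) + ∫ u in (0:ℝ)..t, Li (k+1) (-Real.exp u) := by
  have hexp : ∀ u : ℝ, -Real.exp u < 0 := fun u => neg_neg_iff_pos.mpr (Real.exp_pos u)
  have hsub : (∫ u in (0:ℝ)..t,
        (-Real.exp u) • ((fun s => Li (k+1) s / s) ∘ (fun u => -Real.exp u)) u)
      = ∫ s in (-Real.exp 0)..(-Real.exp t), Li (k+1) s / s := by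
    apply intervalIntegral.integral_comp_smul_deriv'
    · intro x _; exact (Real.hasDerivAt_exp x).neg
    · fun_prop
    · apply (Li_div_cont (k+1)).mono
      rintro s ⟨u, _, rfl⟩
      exact hexp u
  have hlhs : (∫ u in (0:ℝ)..t,
        (-Real.exp u) • ((fun s => Li (k+1) s / s) ∘ (fun u => -Real.exp u)) u)
      = ∫ u in (0:ℝ)..t, Li (k+1) (-Real.exp u) := by
    apply intervalIntegral.integral_congr
    intro u _
    simp only [Function.comp, smul_eq_mul]
    rw [← mul_div_assoc, mul_div_cancel_left₀ _ (ne_of_lt (hexp u))]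
  have hint1 : IntervalIntegrable (fun s => Li (k+1) s / s) volume (-1) 0 :=
    Li_div_int (k+1) (by norm_num)
  have hint2 : IntervalIntegrable (fun s => Li (k+1) s / s) volume (-Real.exp t) 0 :=
    Li_div_int (k+1) (hexp t).le
  have hadd := intervalIntegral.integral_add_adjacent_intervals (a := (-1:ℝ)) (b := 0)
    (c := -Real.exp t) hint1 hint2.symm
  have e1 : (∫ s in (-1:ℝ)..0, Li (k+1) s / s) = - ∫ s in (0:ℝ)..(-1:ℝ), Li (k+1) s / s :=
    intervalIntegral.integral_symm 0 (-1)
  have hL1 : Li (k+2) (-Real.exp t) = ∫ s in (0:ℝ)..(-Real.exp t), Li (k+1) s / s := rfl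
  have hL2 : Li (k+2) (-1 : ℝ) = ∫ s in (0:ℝ)..(-1:ℝ), Li (k+1) s / s := rfl
  rw [Real.exp_zero] at hsub
  rw [hL1, hL2, ← hlhs, hsub]
  linarith [hadd, e1]

lemma H_cont (d : ℕ) : Continuous fun t : ℝ => -(Li d (-Real.exp t)) := by
  apply Continuous.neg
  apply ((Li_aux d).2).comp_continuous (by fun_prop)
  intro x
  simp only [Set.mem_Iic]
  linarith [Real.exp_pos x]

lemma int_pow_div (p : ℕ) (t : ℝ) :
    ∫ u in (0:ℝ)..t, u^p/((p)! : ℝ) = t^(p+1)/(((p+1))! : ℝ) := by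
  rw [intervalIntegral.integral_div, integral_pow, Nat.factorial_succ]
  rw [zero_pow (by omega)]
  push_cast
  have h1 : ((p:ℝ) + 1) ≠ 0 := by positivity
  have h2 : ((p)! : ℝ) ≠ 0 := by positivity
  field_simp
  ring

lemma int_P (m : ℕ) (t : ℝ) :
    (∫ u in (0:ℝ)..t, (u^(m+1)/((m+1)! : ℝ)
      + ∑ k ∈ Finset.Icc 2 (m+1), (-(Li k (-1))) * u^((m+1)-k)/(((m+1)-k)! : ℝ)))
    = t^(m+2)/((m+2)! : ℝ)
      + ∑ k ∈ Finset.Icc 2 (m+1), (-(Li k (-1))) * t^((m+2)-k)/(((m+2)-k)! : ℝ) := by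
  rw [intervalIntegral.integral_add (Continuous.intervalIntegrable (by fun_prop) _ _)
    (Continuous.intervalIntegrable (continuous_finset_sum _ (fun k _ => by fun_prop)) _ _),
    intervalIntegral.integral_finset_sum
      (fun k _ => Continuous.intervalIntegrable (by fun_prop) _ _)]
  congr 1
  · exact int_pow_div (m+1) t
  · apply Finset.sum_congr rfl
    intro k hk
    have hk' : k ≤ m + 1 := (Finset.mem_Icc.mp hk).2
    simp only [mul_div_assoc]
    rw [intervalIntegral.integral_const_mul, int_pow_div]
    have : (m+1) - k + 1 = (m+2) - k := by omega
    rw [this]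


lemma main_bounds (d : ℕ) (hd : 1 ≤ d) : ∀ t : ℝ, 0 ≤ t →
    (t ^ d / (d ! : ℝ)
        + ∑ k ∈ Finset.Icc 2 d, (-(Li k (-1))) * t ^ (d - k) / ((d - k)! : ℝ)
      ≤ -(Li d (-Real.exp t)) ∧
    -(Li d (-Real.exp t))
      ≤ t ^ d / (d ! : ℝ) + Real.log 2 * t ^ (d - 1) / ((d - 1)! : ℝ)
        + ∑ k ∈ Finset.Icc 2 d, (-(Li k (-1))) * t ^ (d - k) / ((d - k)! : ℝ)) := by
  induction d, hd using Nat.le_induction with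
  | base =>
    intro t ht
    have hempty : Finset.Icc 2 1 = (∅ : Finset ℕ) := Finset.Icc_eq_empty (by omega)
    have hLi1 : -(Li 1 (-Real.exp t)) = Real.log (1 + Real.exp t) := by
      simp [Li, sub_neg_eq_add]
    rw [hempty]
    simp only [Finset.sum_empty, pow_one, Nat.factorial_one, Nat.cast_one, div_one, add_zero,
      Nat.sub_self, pow_zero, Nat.factorial_zero, mul_one, hLi1]
    have hexp := Real.exp_pos t
    constructor
    · have h1 : Real.exp t ≤ 1 + Real.exp t := by linarith
      have := Real.log_le_log hexp h1
      rwa [Real.log_exp] at this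
    · have h1 : (1:ℝ) ≤ Real.exp t := Real.one_le_exp ht
      have h2 : 1 + Real.exp t ≤ 2 * Real.exp t := by linarith
      have h3 := Real.log_le_log (by linarith) h2
      rw [Real.log_mul (by norm_num) (ne_of_gt hexp), Real.log_exp] at h3
      linarith
  | succ n hn ih =>
    obtain ⟨m, rfl⟩ : ∃ m, n = m + 1 := ⟨n - 1, by omega⟩
    intro t ht
    simp only [show m + 1 + 1 = m + 2 from rfl, show m + 2 - 1 = m + 1 from rfl]
    have hrec : -(Li (m+2) (-Real.exp t))
        = (-(Li (m+2) (-1))) + ∫ u in (0:ℝ)..t, -(Li (m+1) (-Real.exp u)) := by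
      rw [Li_rec m t, neg_add, intervalIntegral.integral_neg]
    set L : ℝ → ℝ := fun u => u^(m+1)/((m+1)! : ℝ)
        + ∑ k ∈ Finset.Icc 2 (m+1), (-(Li k (-1))) * u^((m+1)-k)/(((m+1)-k)! : ℝ) with hL
    have hLc : Continuous L := by
      apply Continuous.add (by fun_prop)
      exact continuous_finset_sum _ (fun k _ => by fun_prop)
    have hHc := H_cont (m+1)
    have hlow : (∫ u in (0:ℝ)..t, L u) ≤ ∫ u in (0:ℝ)..t, -(Li (m+1) (-Real.exp u)) := by
      apply intervalIntegral.integral_mono_on ht (hLc.intervalIntegrable _ _)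
        (hHc.intervalIntegrable _ _)
      intro u hu
      exact (ih u hu.1).1
    have hhigh : (∫ u in (0:ℝ)..t, -(Li (m+1) (-Real.exp u)))
        ≤ ∫ u in (0:ℝ)..t, (L u + Real.log 2 * u^((m+1)-1)/(((m+1)-1)! : ℝ)) := by
      apply intervalIntegral.integral_mono_on ht (hHc.intervalIntegrable _ _)
        ((hLc.add (by fun_prop)).intervalIntegrable _ _)
      intro u hu
      have := (ih u hu.1).2
      simp only [hL, Pi.add_apply]
      linarith
    have hintL := int_P m t
    have hintU : (∫ u in (0:ℝ)..t, (L u + Real.log 2 * u^((m+1)-1)/(((m+1)-1)! : ℝ)))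
        = (∫ u in (0:ℝ)..t, L u) + Real.log 2 * t^(m+1)/((m+1)! : ℝ) := by
      rw [intervalIntegral.integral_add (hLc.intervalIntegrable _ _)
        (Continuous.intervalIntegrable (by fun_prop) _ _)]
      congr 1
      simp only [Nat.add_sub_cancel, mul_div_assoc]
      rw [intervalIntegral.integral_const_mul, int_pow_div]
    have hsum : (∑ k ∈ Finset.Icc 2 (m+2), (-(Li k (-1))) * t^((m+2)-k)/(((m+2)-k)! : ℝ))
        = (∑ k ∈ Finset.Icc 2 (m+1), (-(Li k (-1))) * t^((m+2)-k)/(((m+2)-k)! : ℝ))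
          + (-(Li (m+2) (-1))) := by
      rw [show m + 2 = (m+1) + 1 from rfl, Finset.sum_Icc_succ_top (by omega)]
      simp
    rw [hsum, hrec]
    constructor
    · linarith [hlow, hintL]
    · linarith [hhigh, hintU, hintL]


/-- For every integer `d ≥ 2` and real `t ≥ 0`,
`t^d/d! + Σ_{k=2}^d a_k t^{d-k}/(d-k)! ≤ -Li_d(-e^t)
  ≤ t^d/d! + (log 2) t^{d-1}/(d-1)! + Σ_{k=2}^d a_k t^{d-k}/(d-k)!`,
where `a_k = -Li_k(-1)`. -/
theorem polylog_of_neg_exp_bounds (d : ℕ) (hd : 2 ≤ d) (t : ℝ) (ht : 0 ≤ t) :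
    t ^ d / (d ! : ℝ)
        + ∑ k ∈ Finset.Icc 2 d, (-(Li k (-1))) * t ^ (d - k) / ((d - k)! : ℝ)
      ≤ -(Li d (-Real.exp t)) ∧
    -(Li d (-Real.exp t))
      ≤ t ^ d / (d ! : ℝ) + Real.log 2 * t ^ (d - 1) / ((d - 1)! : ℝ)
        + ∑ k ∈ Finset.Icc 2 d, (-(Li k (-1))) * t ^ (d - k) / ((d - k)! : ℝ) := by
  exact main_bounds d (by omega) t ht
end

section
/- For every integer d ≥ 0 and every real t, the complete Fermi–Dirac integral satisfies ∫₀^∞ x^d / (1 + e^{x-t}) dx = -d! · Li_{d+1}(-e^t), where Li_{d+1}(z) = Σ_{k≥1} z^k / k^{d+1} for |z| ≤ 1, extended by the integral recursion Li_{j+1}(x) = ∫₀^x Li_j(s)/s ds to negative arguments. -/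
open scoped Nat

open Real MeasureTheory Set Filter Topology

lemma den_pos (t x : ℝ) : 0 < 1 + Real.exp (x - t) := by positivity

lemma cont_inv_den (t : ℝ) : Continuous fun x : ℝ => (1 + Real.exp (x - t))⁻¹ := by
  exact (continuous_const.add ((continuous_id.sub continuous_const).rexp)).inv₀
    fun x => (den_pos t x).ne'

lemma inv_den_le (t x : ℝ) : (1 + Real.exp (x - t))⁻¹ ≤ Real.exp (t - x) := by
  have h : Real.exp (x - t) ≤ 1 + Real.exp (x - t) := by linarith
  have := one_div_le_one_div_of_le (Real.exp_pos (x - t)) h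
  rw [one_div, one_div] at this
  rw [← neg_sub x t, Real.exp_neg]
  exact this

lemma pow_exp_int (d : ℕ) : IntegrableOn (fun x : ℝ => x ^ d * Real.exp (-x)) (Ioi 0) := by
  have h := Real.GammaIntegral_convergent (s := (d : ℝ) + 1) (by positivity)
  refine h.congr_fun ?_ measurableSet_Ioi
  intro x hx
  show Real.exp (-x) * x ^ ((d:ℝ) + 1 - 1) = x ^ d * Real.exp (-x)
  rw [add_sub_cancel_right, Real.rpow_natCast, mul_comm]

lemma integrand_int (d : ℕ) (t : ℝ) :
    IntegrableOn (fun x : ℝ => x ^ d / (1 + Real.exp (x - t))) (Ioi 0) := by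
  refine Integrable.mono' (((pow_exp_int d).const_mul (Real.exp t))) ?_ ?_
  · exact ((continuous_pow d).div
      (continuous_const.add ((continuous_id.sub continuous_const).rexp))
      fun x => (den_pos t x).ne').aestronglyMeasurable.restrict
  · filter_upwards [ae_restrict_mem measurableSet_Ioi] with x hx
    have hx0 : (0:ℝ) ≤ x := le_of_lt hx
    rw [Real.norm_eq_abs, abs_div, abs_of_nonneg (pow_nonneg hx0 d),
      abs_of_pos (den_pos t x), div_eq_mul_inv]
    calc x ^ d * (1 + Real.exp (x - t))⁻¹ ≤ x ^ d * Real.exp (t - x) :=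
          mul_le_mul_of_nonneg_left (inv_den_le t x) (pow_nonneg hx0 d)
      _ = Real.exp t * (x ^ d * Real.exp (-x)) := by
          rw [Real.exp_sub, Real.exp_neg]; field_simp

lemma frac2_le (t x : ℝ) :
    Real.exp (x - t) / (1 + Real.exp (x - t)) ^ 2 ≤ Real.exp (t - x) := by
  have h1 : Real.exp (x - t) ^ 2 ≤ (1 + Real.exp (x - t)) ^ 2 := by
    apply pow_le_pow_left₀ (Real.exp_pos _).le; linarith
  calc Real.exp (x - t) / (1 + Real.exp (x - t)) ^ 2
      ≤ Real.exp (x - t) / Real.exp (x - t) ^ 2 :=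
        div_le_div_of_nonneg_left (Real.exp_pos _).le (by positivity) h1
    _ = Real.exp (t - x) := by
        rw [sq, ← neg_sub t x, Real.exp_neg]
        field_simp

lemma deriv_int (d : ℕ) (t : ℝ) :
    IntegrableOn (fun x : ℝ => x ^ d * (Real.exp (x - t) / (1 + Real.exp (x - t)) ^ 2))
      (Ioi 0) := by
  refine Integrable.mono' (((pow_exp_int d).const_mul (Real.exp t))) ?_ ?_
  · refine Continuous.aestronglyMeasurable ?_ |>.restrict
    exact (continuous_pow d).mul
      (((continuous_id.sub continuous_const).rexp).div
        ((continuous_const.add ((continuous_id.sub continuous_const).rexp)).pow 2)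
        fun x => by positivity)
  · filter_upwards [ae_restrict_mem measurableSet_Ioi] with x hx
    have hx0 : (0:ℝ) ≤ x := le_of_lt hx
    rw [Real.norm_eq_abs, abs_mul, abs_of_nonneg (pow_nonneg hx0 d),
      abs_of_nonneg (by positivity : (0:ℝ) ≤ Real.exp (x - t) / (1 + Real.exp (x - t)) ^ 2)]
    calc x ^ d * (Real.exp (x - t) / (1 + Real.exp (x - t)) ^ 2)
        ≤ x ^ d * Real.exp (t - x) :=
          mul_le_mul_of_nonneg_left (frac2_le t x) (pow_nonneg hx0 d)
      _ = Real.exp t * (x ^ d * Real.exp (-x)) := by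
          rw [Real.exp_sub, Real.exp_neg]; field_simp


lemma flip_frac (t x : ℝ) :
    Real.exp (t - x) / (1 + Real.exp (t - x)) = (1 + Real.exp (x - t))⁻¹ := by
  have h : Real.exp (t - x) * Real.exp (x - t) = 1 := by
    rw [← Real.exp_add]; norm_num
  rw [inv_eq_one_div, div_eq_div_iff (den_pos x t).ne' (den_pos t x).ne', mul_add, mul_one, h]
  ring

lemma tendsto_sub_atBot (t : ℝ) : Tendsto (fun x : ℝ => t - x) atTop atBot := by
  simpa [sub_eq_add_neg] using tendsto_atBot_add_const_left (f := fun x : ℝ => -x)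
    (l := atTop) t tendsto_neg_atTop_atBot

lemma base_case (t : ℝ) :
    ∫ x in Ioi (0:ℝ), (1 + Real.exp (x - t))⁻¹ = Real.log (1 + Real.exp t) := by
  have hderiv : ∀ x ∈ Ioi (0:ℝ),
      HasDerivAt (fun x => -Real.log (1 + Real.exp (t - x)))
        ((1 + Real.exp (x - t))⁻¹) x := by
    intro x _
    have h1 : HasDerivAt (fun x : ℝ => t - x) (-1) x := (hasDerivAt_id x).const_sub t
    have h4 := ((h1.exp.const_add 1).log (den_pos x t).ne').neg
    refine h4.congr_deriv ?_
    rw [← flip_frac]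
    field_simp
  have hcont : Continuous fun x : ℝ => -Real.log (1 + Real.exp (t - x)) := by
    refine (Real.continuousOn_log.comp_continuous
      (continuous_const.add ((continuous_const.sub continuous_id).rexp)) ?_).neg
    exact fun x => (den_pos x t).ne'
  have hint : IntegrableOn (fun x : ℝ => (1 + Real.exp (x - t))⁻¹) (Ioi 0) := by
    have := integrand_int 0 t
    simpa [pow_zero, one_div] using this
  have htend : Tendsto (fun x : ℝ => -Real.log (1 + Real.exp (t - x))) atTop (𝓝 0) := by
    have h2 := Real.tendsto_exp_atBot.comp (tendsto_sub_atBot t)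
    have h3 : Tendsto (fun x : ℝ => 1 + Real.exp (t - x)) atTop (𝓝 1) := by
      simpa using h2.const_add 1
    have h4 := ((Real.continuousAt_log one_ne_zero).tendsto.comp h3).neg
    simpa using h4
  have := integral_Ioi_of_hasDerivAt_of_tendsto hcont.continuousWithinAt hderiv hint htend
  simpa using this

lemma tend_pow_inv (d : ℕ) (t : ℝ) :
    Tendsto (fun x : ℝ => x ^ d * (1 + Real.exp (x - t))⁻¹) atTop (𝓝 0) := by
  apply squeeze_zero_norm' (a := fun x => Real.exp t * (x ^ d * Real.exp (-x)))
  · filter_upwards [eventually_ge_atTop (0:ℝ)] with x hx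
    rw [Real.norm_eq_abs, abs_mul, abs_of_nonneg (pow_nonneg hx d),
      abs_of_pos (by positivity : (0:ℝ) < (1 + Real.exp (x - t))⁻¹)]
    calc x ^ d * (1 + Real.exp (x - t))⁻¹ ≤ x ^ d * Real.exp (t - x) :=
          mul_le_mul_of_nonneg_left (inv_den_le t x) (pow_nonneg hx d)
      _ = Real.exp t * (x ^ d * Real.exp (-x)) := by
          rw [Real.exp_sub, Real.exp_neg]; field_simp
  · simpa using (tendsto_pow_mul_exp_neg_atTop_nhds_zero d).const_mul (Real.exp t)

lemma ibp (d : ℕ) (t : ℝ) :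
    ∫ x in Ioi (0:ℝ), x ^ (d + 1) * (Real.exp (x - t) / (1 + Real.exp (x - t)) ^ 2)
      = ((d : ℝ) + 1) * ∫ x in Ioi (0:ℝ), x ^ d / (1 + Real.exp (x - t)) := by
  set f' : ℝ → ℝ := fun x =>
    ((d : ℝ) + 1) * (x ^ d / (1 + Real.exp (x - t)))
      - x ^ (d + 1) * (Real.exp (x - t) / (1 + Real.exp (x - t)) ^ 2) with hf'
  have hderiv : ∀ x ∈ Ioi (0:ℝ),
      HasDerivAt (fun x => x ^ (d + 1) * (1 + Real.exp (x - t))⁻¹) (f' x) x := by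
    intro x _
    have hi : HasDerivAt (fun x : ℝ => (1 + Real.exp (x - t))⁻¹)
        (-(Real.exp (x - t) * 1) / (1 + Real.exp (x - t)) ^ 2) x :=
      (((hasDerivAt_id x).sub_const t).exp.const_add 1).inv (den_pos t x).ne'
    have := (hasDerivAt_pow (d + 1) x).mul hi
    refine this.congr_deriv ?_
    rw [hf']
    push_cast
    ring
  have hcont : Continuous fun x : ℝ => x ^ (d + 1) * (1 + Real.exp (x - t))⁻¹ :=
    (continuous_pow _).mul ((continuous_const.add
      ((continuous_id.sub continuous_const).rexp)).inv₀ fun x => (den_pos t x).ne')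
  have h1 : IntegrableOn (fun x : ℝ => ((d : ℝ) + 1) * (x ^ d / (1 + Real.exp (x - t))))
      (Ioi 0) := (integrand_int d t).const_mul _
  have hint : IntegrableOn f' (Ioi 0) := h1.sub (deriv_int (d + 1) t)
  have key := integral_Ioi_of_hasDerivAt_of_tendsto hcont.continuousWithinAt hderiv hint
    (tend_pow_inv (d + 1) t)
  rw [hf'] at key
  rw [integral_sub h1 (deriv_int (d + 1) t)] at key
  rw [MeasureTheory.integral_const_mul] at key
  simp only [zero_pow (Nat.succ_ne_zero d), zero_mul, sub_zero, zero_sub, zero_mul] at key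
  linarith [key]

set_option maxHeartbeats 1000000 in
lemma F_hasDeriv (d : ℕ) (t₀ : ℝ) :
    HasDerivAt (fun t => ∫ x in Ioi (0:ℝ), x ^ d / (1 + Real.exp (x - t)))
      (∫ x in Ioi (0:ℝ), x ^ d * (Real.exp (x - t₀) / (1 + Real.exp (x - t₀)) ^ 2)) t₀ := by
  set F : ℝ → ℝ → ℝ := fun t x => x ^ d / (1 + Real.exp (x - t)) with hF
  set F' : ℝ → ℝ → ℝ := fun t x => x ^ d * (Real.exp (x - t) / (1 + Real.exp (x - t)) ^ 2)
    with hF'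
  set bound : ℝ → ℝ := fun x => Real.exp (t₀ + 1) * (x ^ d * Real.exp (-x)) with hbound
  have h1 : ∀ᶠ t in 𝓝 t₀, AEStronglyMeasurable (F t) (volume.restrict (Ioi 0)) := by
    refine Eventually.of_forall fun t => ?_
    exact ((continuous_pow d).div
      (continuous_const.add ((continuous_id.sub continuous_const).rexp))
      fun x => (den_pos t x).ne').aestronglyMeasurable.restrict
  have h2 : Integrable (F t₀) (volume.restrict (Ioi 0)) := integrand_int d t₀
  have h3 : AEStronglyMeasurable (F' t₀) (volume.restrict (Ioi 0)) := by
    refine Continuous.aestronglyMeasurable ?_ |>.restrict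
    exact (continuous_pow d).mul
      (((continuous_id.sub continuous_const).rexp).div
        ((continuous_const.add ((continuous_id.sub continuous_const).rexp)).pow 2)
        fun x => by positivity)
  have h4 : ∀ᵐ x ∂(volume.restrict (Ioi (0:ℝ))),
      ∀ t ∈ Metric.ball t₀ 1, ‖F' t x‖ ≤ bound x := by
    filter_upwards [ae_restrict_mem measurableSet_Ioi] with x hx t ht
    have hx0 : (0:ℝ) ≤ x := le_of_lt hx
    have ht1 : t ≤ t₀ + 1 := by
      rw [Metric.mem_ball, Real.dist_eq, abs_lt] at ht
      linarith
    show ‖x ^ d * (Real.exp (x - t) / (1 + Real.exp (x - t)) ^ 2)‖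
      ≤ Real.exp (t₀ + 1) * (x ^ d * Real.exp (-x))
    rw [Real.norm_eq_abs, abs_mul, abs_of_nonneg (pow_nonneg hx0 d),
      abs_of_nonneg (by positivity : (0:ℝ) ≤ Real.exp (x - t) / (1 + Real.exp (x - t)) ^ 2)]
    calc x ^ d * (Real.exp (x - t) / (1 + Real.exp (x - t)) ^ 2)
        ≤ x ^ d * Real.exp (t - x) :=
          mul_le_mul_of_nonneg_left (frac2_le t x) (pow_nonneg hx0 d)
      _ ≤ x ^ d * Real.exp (t₀ + 1 - x) :=
          mul_le_mul_of_nonneg_left (Real.exp_le_exp.2 (by linarith)) (pow_nonneg hx0 d)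
      _ = Real.exp (t₀ + 1) * (x ^ d * Real.exp (-x)) := by
          rw [show t₀ + 1 - x = (t₀ + 1) + (-x) by ring, Real.exp_add]; ring
  have h5 : Integrable bound (volume.restrict (Ioi 0)) := (pow_exp_int d).const_mul _
  have h6 : ∀ᵐ x ∂(volume.restrict (Ioi (0:ℝ))),
      ∀ t ∈ Metric.ball t₀ 1, HasDerivAt (fun t => F t x) (F' t x) t := by
    refine Eventually.of_forall fun x t _ => ?_
    have hd1 : HasDerivAt (fun t : ℝ => x - t) (-1) t := (hasDerivAt_id t).const_sub x
    have h3' := ((hd1.exp.const_add 1).inv (den_pos t x).ne').const_mul (x ^ d)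
    show HasDerivAt (fun t => x ^ d / (1 + Real.exp (x - t)))
      (x ^ d * (Real.exp (x - t) / (1 + Real.exp (x - t)) ^ 2)) t
    simp only [div_eq_mul_inv]
    refine h3'.congr_deriv ?_
    ring
  exact (hasDerivAt_integral_of_dominated_loc_of_deriv_le (Metric.ball_mem_nhds t₀ one_pos) h1 h2 h3 h4 h5 h6).2


lemma Li_one_def (x : ℝ) : Li 1 x = -Real.log (1 - x) := rfl
lemma Li_succ_def (k : ℕ) (x : ℝ) : Li (k + 2) x = ∫ s in (0:ℝ)..x, Li (k + 1) s / s := rfl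

/-- bound and continuity on negatives, by joint induction -/
lemma Li_props : ∀ j : ℕ, (∀ s : ℝ, s ≤ 0 → |Li (j + 1) s| ≤ -s)
    ∧ (∀ x : ℝ, x < 0 → ContinuousAt (Li (j + 1)) x) := by
  intro j
  induction j with
  | zero =>
    constructor
    · intro s hs
      rw [Li_one_def, abs_neg, abs_of_nonneg (Real.log_nonneg (by linarith))]
      have := Real.log_le_sub_one_of_pos (by linarith : (0:ℝ) < 1 - s)
      linarith
    · intro x hx
      have hne : (1:ℝ) - x ≠ 0 := by linarith
      have h : ContinuousAt (fun y : ℝ => -Real.log (1 - y)) x :=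
        ((Real.continuousAt_log hne).comp
          ((continuous_const.sub continuous_id).continuousAt)).neg
      exact h
  | succ j ih =>
    obtain ⟨hbound, hcont⟩ := ih
    -- interval integrability of s ↦ Li (j+1) s / s on [x, 0]
    have hii : ∀ x : ℝ, x ≤ 0 → IntervalIntegrable (fun s => Li (j + 1) s / s) volume 0 x := by
      intro x hx
      rw [intervalIntegrable_iff]
      have huIoc : Set.uIoc (0:ℝ) x = Ioc x 0 := by
        rw [uIoc_comm, uIoc_of_le hx]
      rw [huIoc]
      refine Integrable.mono' (g := fun _ => (1:ℝ))
        (integrableOn_const measure_Ioc_lt_top.ne) ?_ ?_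
      · have hIoo : ContinuousOn (fun s => Li (j + 1) s / s) (Ioo x 0) := by
          intro s hs
          exact ((hcont s hs.2).div continuousAt_id hs.2.ne).continuousWithinAt
        have : (volume.restrict (Ioc x 0)) = (volume.restrict (Ioo x 0)) :=
          (Measure.restrict_congr_set Ioo_ae_eq_Ioc).symm
        rw [this]
        exact hIoo.aestronglyMeasurable measurableSet_Ioo
      · filter_upwards [ae_restrict_mem measurableSet_Ioc] with s hs
        rcases eq_or_lt_of_le hs.2 with h0 | h0
        · have : |Li (j + 1) s| ≤ -s := hbound s hs.2
          rw [Real.norm_eq_abs, abs_div]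
          rw [h0] at this ⊢
          simp
        · rw [Real.norm_eq_abs, abs_div, div_le_one (abs_pos.mpr h0.ne)]
          calc |Li (j + 1) s| ≤ -s := hbound s hs.2
            _ ≤ |s| := neg_le_abs s
    have hderiv : ∀ x : ℝ, x < 0 → HasDerivAt (Li (j + 2)) (Li (j + 1) x / x) x := by
      intro x hx
      have hmeas : StronglyMeasurableAtFilter (fun s => Li (j + 1) s / s) (𝓝 x) volume := by
        refine ContinuousOn.stronglyMeasurableAtFilter isOpen_Iio ?_ x hx
        intro s hs
        exact ((hcont s hs).div continuousAt_id (ne_of_lt hs)).continuousWithinAt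
      have hC : ContinuousAt (fun s => Li (j + 1) s / s) x :=
        (hcont x hx).div continuousAt_id hx.ne
      have := intervalIntegral.integral_hasDerivAt_right (hii x hx.le) hmeas hC
      exact this.congr_deriv rfl
    refine ⟨?_, ?_⟩
    · intro s hs
      rcases eq_or_lt_of_le hs with h0 | h0
      · subst h0
        rw [Li_succ_def]
        simp
      · rw [Li_succ_def]
        have := intervalIntegral.norm_integral_le_of_norm_le_const
          (C := 1) (a := (0:ℝ)) (b := s) (f := fun u => Li (j + 1) u / u) ?_
        · rw [Real.norm_eq_abs] at this
          calc |∫ u in (0:ℝ)..s, Li (j + 1) u / u| ≤ 1 * |s - 0| := this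
            _ = -s := by rw [abs_of_neg (by linarith : s - 0 < 0)]; ring
        · intro u hu
          have huIoc : Set.uIoc (0:ℝ) s = Ioc s 0 := by rw [uIoc_comm, uIoc_of_le hs]
          rw [huIoc] at hu
          rcases eq_or_lt_of_le hu.2 with h0' | h0'
          · have hb := hbound u hu.2
            rw [Real.norm_eq_abs, abs_div]
            rw [h0'] at hb ⊢
            simp
          · rw [Real.norm_eq_abs, abs_div, div_le_one (abs_pos.mpr h0'.ne)]
            calc |Li (j + 1) u| ≤ -u := hbound u hu.2
              _ ≤ |u| := neg_le_abs u
    · intro x hx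
      exact (hderiv x hx).continuousAt

lemma Li_hasDeriv (j : ℕ) (x : ℝ) (hx : x < 0) :
    HasDerivAt (Li (j + 2)) (Li (j + 1) x / x) x := by
  obtain ⟨hbound, hcont⟩ := Li_props j
  have hii : IntervalIntegrable (fun s => Li (j + 1) s / s) volume 0 x := by
    rw [intervalIntegrable_iff]
    have huIoc : Set.uIoc (0:ℝ) x = Ioc x 0 := by rw [uIoc_comm, uIoc_of_le hx.le]
    rw [huIoc]
    refine Integrable.mono' (g := fun _ => (1:ℝ))
      (integrableOn_const measure_Ioc_lt_top.ne) ?_ ?_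
    · have hIoo : ContinuousOn (fun s => Li (j + 1) s / s) (Ioo x 0) := by
        intro s hs
        exact ((hcont s hs.2).div continuousAt_id hs.2.ne).continuousWithinAt
      have : (volume.restrict (Ioc x 0)) = (volume.restrict (Ioo x 0)) :=
        (Measure.restrict_congr_set Ioo_ae_eq_Ioc).symm
      rw [this]
      exact hIoo.aestronglyMeasurable measurableSet_Ioo
    · filter_upwards [ae_restrict_mem measurableSet_Ioc] with s hs
      rcases eq_or_lt_of_le hs.2 with h0 | h0
      · have hb := hbound s hs.2
        rw [Real.norm_eq_abs, abs_div]
        rw [h0] at hb ⊢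
        simp
      · rw [Real.norm_eq_abs, abs_div, div_le_one (abs_pos.mpr h0.ne)]
        calc |Li (j + 1) s| ≤ -s := hbound s hs.2
          _ ≤ |s| := neg_le_abs s
  have hmeas : StronglyMeasurableAtFilter (fun s => Li (j + 1) s / s) (𝓝 x) volume := by
    refine ContinuousOn.stronglyMeasurableAtFilter isOpen_Iio ?_ x hx
    intro s hs
    exact ((hcont s hs).div continuousAt_id (ne_of_lt hs)).continuousWithinAt
  have hC : ContinuousAt (fun s => Li (j + 1) s / s) x :=
    (hcont x hx).div continuousAt_id hx.ne
  exact intervalIntegral.integral_hasDerivAt_right hii hmeas hC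

lemma Li_exp_hasDeriv (j : ℕ) (t : ℝ) :
    HasDerivAt (fun t => Li (j + 2) (-Real.exp t)) (Li (j + 1) (-Real.exp t)) t := by
  have h1 : HasDerivAt (fun t : ℝ => -Real.exp t) (-Real.exp t) t :=
    (Real.hasDerivAt_exp t).neg
  have hx : -Real.exp t < 0 := neg_lt_zero.mpr (Real.exp_pos t)
  have h2 := (Li_hasDeriv j (-Real.exp t) hx).comp t h1
  have heq : Li (j + 1) (-Real.exp t) / (-Real.exp t) * (-Real.exp t)
      = Li (j + 1) (-Real.exp t) :=
    div_mul_cancel₀ _ (neg_ne_zero.mpr (Real.exp_ne_zero t))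
  rw [heq] at h2
  exact h2

lemma integrand_le (d : ℕ) (t x : ℝ) (hx : (0:ℝ) ≤ x) :
    x ^ d / (1 + Real.exp (x - t)) ≤ Real.exp t * (x ^ d * Real.exp (-x)) := by
  rw [div_eq_mul_inv]
  calc x ^ d * (1 + Real.exp (x - t))⁻¹ ≤ x ^ d * Real.exp (t - x) :=
        mul_le_mul_of_nonneg_left (inv_den_le t x) (pow_nonneg hx d)
    _ = Real.exp t * (x ^ d * Real.exp (-x)) := by
        rw [Real.exp_sub, Real.exp_neg]; field_simp

/-- The complete Fermi–Dirac integral: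
`∫₀^∞ x^d / (1 + e^{x-t}) dx = -d! · Li_{d+1}(-e^t)` for every `d ≥ 0` and real `t`. -/
theorem fermi_dirac_integral_eq_polylog (d : ℕ) (t : ℝ) :
    ∫ x in Set.Ioi (0:ℝ), x ^ d / (1 + Real.exp (x - t))
      = -(d ! : ℝ) * Li (d + 1) (-Real.exp t) := by
  induction d generalizing t with
  | zero =>
    simp only [pow_zero, one_div, Nat.factorial_zero, Nat.cast_one]
    rw [base_case t, Li_one_def, sub_neg_eq_add]
    ring
  | succ d ih =>
    set g : ℝ → ℝ := fun s =>
      (∫ x in Ioi (0:ℝ), x ^ (d + 1) / (1 + Real.exp (x - s)))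
        + ((d + 1)! : ℝ) * Li (d + 2) (-Real.exp s) with hgdef
    have hg : ∀ s, HasDerivAt g 0 s := by
      intro s
      have hF : HasDerivAt (fun u => ∫ x in Ioi (0:ℝ), x ^ (d + 1) / (1 + Real.exp (x - u)))
          (((d : ℝ) + 1) * ∫ x in Ioi (0:ℝ), x ^ d / (1 + Real.exp (x - s))) s := by
        have := F_hasDeriv (d + 1) s
        rwa [ibp d s] at this
      have hL := (Li_exp_hasDeriv d s).const_mul ((d + 1)! : ℝ)
      have hsum := hF.add hL
      refine hsum.congr_deriv ?_
      rw [ih s, Nat.factorial_succ]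
      push_cast
      ring
    have hgt0 : Tendsto g atBot (𝓝 0) := by
      have comp1 : Tendsto
          (fun s => ∫ x in Ioi (0:ℝ), x ^ (d + 1) / (1 + Real.exp (x - s))) atBot (𝓝 0) := by
        set C : ℝ := ∫ x in Ioi (0:ℝ), x ^ (d + 1) * Real.exp (-x) with hC
        have hub : ∀ s : ℝ,
            (∫ x in Ioi (0:ℝ), x ^ (d + 1) / (1 + Real.exp (x - s))) ≤ Real.exp s * C := by
          intro s
          have hmono := setIntegral_mono_on (integrand_int (d + 1) s)
            ((pow_exp_int (d + 1)).const_mul (Real.exp s)) measurableSet_Ioi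
            (fun x hx => integrand_le (d + 1) s x (le_of_lt hx))
          rwa [MeasureTheory.integral_const_mul] at hmono
        have hlb : ∀ s : ℝ,
            (0:ℝ) ≤ ∫ x in Ioi (0:ℝ), x ^ (d + 1) / (1 + Real.exp (x - s)) := by
          intro s
          refine setIntegral_nonneg measurableSet_Ioi fun x hx => ?_
          have : (0:ℝ) < x := hx
          positivity
        have hCtend : Tendsto (fun s : ℝ => Real.exp s * C) atBot (𝓝 0) := by
          simpa using Real.tendsto_exp_atBot.mul_const C
        exact tendsto_of_tendsto_of_tendsto_of_le_of_le tendsto_const_nhds hCtend hlb hub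
      have comp2 : Tendsto
          (fun s => ((d + 1)! : ℝ) * Li (d + 2) (-Real.exp s)) atBot (𝓝 0) := by
        apply squeeze_zero_norm' (a := fun s => ((d + 1)! : ℝ) * Real.exp s)
        · refine Eventually.of_forall fun s => ?_
          rw [Real.norm_eq_abs, abs_mul, abs_of_nonneg (by positivity : (0:ℝ) ≤ ((d + 1)! : ℝ))]
          refine mul_le_mul_of_nonneg_left ?_ (by positivity)
          have hle : (-Real.exp s) ≤ 0 := neg_nonpos.mpr (Real.exp_pos s).le
          have := (Li_props (d + 1)).1 (-Real.exp s) hle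
          simpa using this
        · simpa using Real.tendsto_exp_atBot.const_mul ((d + 1)! : ℝ)
      have := comp1.add comp2
      simpa using this
    have hg0 : ∀ s, g s = g t := fun s =>
      is_const_of_deriv_eq_zero (fun x => (hg x).differentiableAt) (fun x => (hg x).deriv) s t
    have hgt : g t = 0 :=
      tendsto_nhds_unique tendsto_const_nhds (hgt0.congr hg0)
    have hfinal : (∫ x in Ioi (0:ℝ), x ^ (d + 1) / (1 + Real.exp (x - t)))
        = -((d + 1)! : ℝ) * Li (d + 2) (-Real.exp t) := by
      rw [hgdef] at hgt
      simp only at hgt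
      linarith
    exact hfinal
end

section
/- Let Ω ⊂ ℝ² be an open bounded convex set and define the Hilbert distance d_Ω(a,b) = (1/2) log( (|a-p_b|/|b-p_b|)·(|b-p_a|/|a-p_a|) ) for distinct a, b ∈ Ω, where p_a, p_b are the intersection points of the line through a and b with ∂Ω (p_a on the a-side, p_b on the b-side), and d_Ω(a,a) = 0. Then d_Ω is a metric on Ω: it is symmetric, nonnegative, vanishes exactly on the diagonal, and satisfies the triangle inequality. -/
open Set Metric Bornology

set_option linter.unusedSectionVars false

namespace HilbertMetricAux

variable {E : Type*} [NormedAddCommGroup E] [NormedSpace ℝ E]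

/-- translated body -/
def S (Ω : Set E) (x : E) : Set E := (fun z => x + z) ⁻¹' Ω

noncomputable def tt (Ω : Set E) (x y : E) : ℝ := gauge (S Ω x) (y - x)

variable {Ω : Set E} {x y : E}

lemma mem_S : y ∈ S Ω x ↔ x + y ∈ Ω := Iff.rfl

lemma S_zero_mem (hx : x ∈ Ω) : (0 : E) ∈ S Ω x := by simp [mem_S, hx]

lemma S_open (hopen : IsOpen Ω) : IsOpen (S Ω x) :=
  hopen.preimage (continuous_const.add continuous_id)

lemma S_convex (hconv : Convex ℝ Ω) : Convex ℝ (S Ω x) :=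
  hconv.translate_preimage_right x

lemma S_nhds (hopen : IsOpen Ω) (hx : x ∈ Ω) : S Ω x ∈ nhds (0 : E) :=
  (S_open hopen).mem_nhds (S_zero_mem hx)

lemma S_absorbent (hopen : IsOpen Ω) (hx : x ∈ Ω) : Absorbent ℝ (S Ω x) :=
  absorbent_nhds_zero (S_nhds hopen hx)

lemma S_vonNBounded (hbdd : IsBounded Ω) : IsVonNBounded ℝ (S Ω x) := by
  rw [NormedSpace.isVonNBounded_iff]
  obtain ⟨r, hr⟩ := hbdd.subset_closedBall 0
  refine (isBounded_closedBall (x := -x) (r := r)).subset ?_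
  intro y hy
  have h1 : x + y ∈ closedBall (0 : E) r := hr hy
  simp only [mem_closedBall, dist_eq_norm, sub_zero] at h1
  simp only [mem_closedBall, dist_eq_norm, sub_neg_eq_add]
  simpa [add_comm] using h1

lemma tt_lt_one (hy : y ∈ Ω) (hopen : IsOpen Ω) : tt Ω x y < 1 := by
  apply gauge_lt_one_of_mem_of_isOpen (S_open hopen)
  simp [mem_S, hy]

lemma tt_nonneg : 0 ≤ tt Ω x y := gauge_nonneg _

lemma tt_pos (hopen : IsOpen Ω) (hbdd : IsBounded Ω) (hx : x ∈ Ω) (hne : x ≠ y) :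
    0 < tt Ω x y :=
  (gauge_pos (S_absorbent hopen hx) (S_vonNBounded hbdd)).2
    (sub_ne_zero.2 (Ne.symm hne))

/-- the exit point of the ray from `x` through `y` lies on the frontier -/
lemma exit_mem_frontier (hopen : IsOpen Ω) (hconv : Convex ℝ Ω) (hbdd : IsBounded Ω)
    (hx : x ∈ Ω) (hy : y ∈ Ω) (hne : x ≠ y) :
    x + (tt Ω x y)⁻¹ • (y - x) ∈ frontier Ω := by
  have ht : 0 < tt Ω x y := tt_pos hopen hbdd hx hne
  have h1 : gauge (S Ω x) ((tt Ω x y)⁻¹ • (y - x)) = 1 := by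
    rw [gauge_smul_of_nonneg (inv_nonneg.2 ht.le), smul_eq_mul]
    exact inv_mul_cancel₀ ht.ne'
  have h2 : (tt Ω x y)⁻¹ • (y - x) ∈ frontier (S Ω x) :=
    (gauge_eq_one_iff_mem_frontier (S_convex hconv) (S_nhds hopen hx)).1 h1
  have h3 : frontier (S Ω x) = (Homeomorph.addLeft x) ⁻¹' frontier Ω := by
    rw [Homeomorph.preimage_frontier]; rfl
  rw [h3] at h2
  exact h2


variable {a b c : E}

lemma tt_lt_of_lt (hopen : IsOpen Ω) (hconv : Convex ℝ Ω)
    (ha : a ∈ Ω) (hb : b ∈ Ω) (hc : c ∈ Ω) {p q : ℝ}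
    (hp : tt Ω a b < p) (hp1 : p < 1) (hq : tt Ω b c < q) (hq1 : q < 1) :
    tt Ω a c < p + q - p * q := by
  have hp0 : 0 < p := lt_of_le_of_lt tt_nonneg hp
  have hq0 : 0 < q := lt_of_le_of_lt tt_nonneg hq
  have hv : a + p⁻¹ • (b - a) ∈ Ω := by
    have h1 : gauge (S Ω a) (p⁻¹ • (b - a)) < 1 := by
      rw [gauge_smul_of_nonneg (inv_nonneg.2 hp0.le), smul_eq_mul,
        inv_mul_lt_iff₀ hp0, mul_one]
      exact hp
    have h2 : p⁻¹ • (b - a) ∈ S Ω a := by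
      rw [← gauge_lt_one_eq_self_of_isOpen (S_convex hconv) (S_zero_mem ha) (S_open hopen)]
      exact h1
    exact h2
  have hw : b + q⁻¹ • (c - b) ∈ Ω := by
    have h1 : gauge (S Ω b) (q⁻¹ • (c - b)) < 1 := by
      rw [gauge_smul_of_nonneg (inv_nonneg.2 hq0.le), smul_eq_mul,
        inv_mul_lt_iff₀ hq0, mul_one]
      exact hq
    have h2 : q⁻¹ • (c - b) ∈ S Ω b := by
      rw [← gauge_lt_one_eq_self_of_isOpen (S_convex hconv) (S_zero_mem hb) (S_open hopen)]
      exact h1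
    exact h2
  set r := p + q - p * q with hrdef
  have hr0 : 0 < r := by nlinarith
  have hlam : 0 ≤ p * (1 - q) / r := div_nonneg (by nlinarith) hr0.le
  have hmu : 0 ≤ q / r := by positivity
  have hsum : p * (1 - q) / r + q / r = 1 := by
    field_simp
    rw [hrdef]; ring
  have hkey : a + r⁻¹ • (c - a) ∈ Ω := by
    have hcomb := hconv hv hw hlam hmu hsum
    have heq : (p * (1 - q) / r) • (a + p⁻¹ • (b - a)) + (q / r) • (b + q⁻¹ • (c - b))
        = a + r⁻¹ • (c - a) := by
      match_scalars
      · field_simp; rw [hrdef]; ring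
      · field_simp; rw [hrdef]; ring
      · field_simp
    rw [heq] at hcomb
    exact hcomb
  have h2 : r⁻¹ • (c - a) ∈ S Ω a := hkey
  have h3 : gauge (S Ω a) (r⁻¹ • (c - a)) < 1 :=
    gauge_lt_one_of_mem_of_isOpen (S_open hopen) h2
  rw [gauge_smul_of_nonneg (inv_nonneg.2 hr0.le), smul_eq_mul,
    inv_mul_lt_iff₀ hr0, mul_one] at h3
  exact h3

lemma one_sub_tt_mul_le (hopen : IsOpen Ω) (hconv : Convex ℝ Ω) (hbdd : IsBounded Ω)
    (ha : a ∈ Ω) (hb : b ∈ Ω) (hc : c ∈ Ω) :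
    (1 - tt Ω a b) * (1 - tt Ω b c) ≤ 1 - tt Ω a c := by
  by_contra h
  push_neg at h
  set p₀ := tt Ω a b with hp₀def
  set q₀ := tt Ω b c with hq₀def
  have hp₀ : 0 ≤ p₀ := tt_nonneg
  have hq₀ : 0 ≤ q₀ := tt_nonneg
  have hp₁ : p₀ < 1 := tt_lt_one hb hopen
  have hq₁ : q₀ < 1 := tt_lt_one hc hopen
  have hg : 0 < tt Ω a c - (p₀ + q₀ - p₀ * q₀) := by nlinarith
  set g := tt Ω a c - (p₀ + q₀ - p₀ * q₀) with hgdef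
  set δ := min (g / 4) (min ((1 - p₀) / 2) ((1 - q₀) / 2)) with hδdef
  have hδ : 0 < δ := by
    apply lt_min (by linarith) (lt_min (by linarith) (by linarith))
  have hδg : δ ≤ g / 4 := min_le_left _ _
  have hδp : δ ≤ (1 - p₀) / 2 := le_trans (min_le_right _ _) (min_le_left _ _)
  have hδq : δ ≤ (1 - q₀) / 2 := le_trans (min_le_right _ _) (min_le_right _ _)
  have h1 := tt_lt_of_lt hopen hconv ha hb hc (p := p₀ + δ) (q := q₀ + δ)
    (by linarith) (by linarith) (by linarith) (by linarith)
  nlinarith [h1, hδ, hδg, hp₀, hq₀]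

end HilbertMetricAux


open HilbertMetricAux




/-- The Hilbert distance on an open bounded convex set `Ω ⊂ ℝ²` is a metric:
symmetric, nonnegative, vanishing exactly on the diagonal, and satisfying the
triangle inequality. Here `d` is any function satisfying the defining formula
`d(a,b) = (1/2) log((|a-p_b|/|b-p_b|)·(|b-p_a|/|a-p_a|))` for distinct `a, b ∈ Ω`,
where `p_a, p_b` are the intersection points of the line `ab` with `∂Ω`
(`p_a` on the `a`-side, `p_b` on the `b`-side), and `d(a,a) = 0`. -/
theorem hilbert_distance_is_metric
    (Ω : Set (EuclideanSpace ℝ (Fin 2)))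
    (hopen : IsOpen Ω) (hbdd : Bornology.IsBounded Ω) (hconv : Convex ℝ Ω)
    (d : EuclideanSpace ℝ (Fin 2) → EuclideanSpace ℝ (Fin 2) → ℝ)
    (hdiag : ∀ a ∈ Ω, d a a = 0)
    (hformula : ∀ a ∈ Ω, ∀ b ∈ Ω, a ≠ b →
      ∀ pa pb : EuclideanSpace ℝ (Fin 2),
        pa ∈ frontier Ω → pb ∈ frontier Ω →
        (∃ s : ℝ, s < 0 ∧ pa = a + s • (b - a)) →
        (∃ s : ℝ, 1 < s ∧ pb = a + s • (b - a)) →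
        d a b = (1 / 2) * Real.log ((dist a pb / dist b pb) * (dist b pa / dist a pa))) :
    (∀ a ∈ Ω, ∀ b ∈ Ω, d a b = d b a) ∧
    (∀ a ∈ Ω, ∀ b ∈ Ω, 0 ≤ d a b) ∧
    (∀ a ∈ Ω, ∀ b ∈ Ω, (d a b = 0 ↔ a = b)) ∧
    (∀ a ∈ Ω, ∀ b ∈ Ω, ∀ c ∈ Ω, d a c ≤ d a b + d b c) := by
  classical
  -- the distance in terms of the two gauge ("Funk") weights
  have hfor : ∀ a ∈ Ω, ∀ b ∈ Ω, a ≠ b →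
      d a b = (1 / 2) * Real.log (((1 - tt Ω a b) * (1 - tt Ω b a))⁻¹) := by
    intro a ha b hb hne
    have hτb0 : 0 < tt Ω a b := tt_pos hopen hbdd ha hne
    have hτa0 : 0 < tt Ω b a := tt_pos hopen hbdd hb hne.symm
    have hτb1 : tt Ω a b < 1 := tt_lt_one hb hopen
    have hτa1 : tt Ω b a < 1 := tt_lt_one ha hopen
    set τb := tt Ω a b
    set τa := tt Ω b a
    have hsb : 1 < τb⁻¹ := (one_lt_inv₀ hτb0).2 hτb1
    have hsa : 1 < τa⁻¹ := (one_lt_inv₀ hτa0).2 hτa1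
    have hpb : a + τb⁻¹ • (b - a) ∈ frontier Ω :=
      exit_mem_frontier hopen hconv hbdd ha hb hne
    have hpa : b + τa⁻¹ • (a - b) ∈ frontier Ω :=
      exit_mem_frontier hopen hconv hbdd hb ha hne.symm
    have hpa_eq : b + τa⁻¹ • (a - b) = a + (1 - τa⁻¹) • (b - a) := by module
    have hd := hformula a ha b hb hne (b + τa⁻¹ • (a - b)) (a + τb⁻¹ • (b - a)) hpa hpb
      ⟨1 - τa⁻¹, by linarith, hpa_eq⟩ ⟨τb⁻¹, hsb, rfl⟩
    rw [hd]
    have hL : (0 : ℝ) < ‖b - a‖ := norm_pos_iff.2 (sub_ne_zero.2 hne.symm)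
    set L := ‖b - a‖ with hLdef
    have d1 : dist a (a + τb⁻¹ • (b - a)) = τb⁻¹ * L := by
      rw [dist_eq_norm]
      have h : a - (a + τb⁻¹ • (b - a)) = (-τb⁻¹) • (b - a) := by module
      rw [h, norm_smul, Real.norm_eq_abs, abs_neg, abs_of_pos (by positivity)]
    have d2 : dist b (a + τb⁻¹ • (b - a)) = (τb⁻¹ - 1) * L := by
      rw [dist_eq_norm]
      have h : b - (a + τb⁻¹ • (b - a)) = (1 - τb⁻¹) • (b - a) := by module
      rw [h, norm_smul, Real.norm_eq_abs, abs_of_neg (by linarith)]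
      ring_nf
      rw [hLdef]
    have d3 : dist b (b + τa⁻¹ • (a - b)) = τa⁻¹ * L := by
      rw [dist_eq_norm]
      have h : b - (b + τa⁻¹ • (a - b)) = τa⁻¹ • (b - a) := by module
      rw [h, norm_smul, Real.norm_eq_abs, abs_of_pos (by positivity)]
    have d4 : dist a (b + τa⁻¹ • (a - b)) = (τa⁻¹ - 1) * L := by
      rw [dist_eq_norm]
      have h : a - (b + τa⁻¹ • (a - b)) = (τa⁻¹ - 1) • (b - a) := by module
      rw [h, norm_smul, Real.norm_eq_abs, abs_of_pos (by linarith)]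
    have h1 : τb⁻¹ - 1 ≠ 0 := by linarith
    have h2 : τa⁻¹ - 1 ≠ 0 := by linarith
    have h3 : (1 : ℝ) - τb ≠ 0 := by linarith
    have h4 : (1 : ℝ) - τa ≠ 0 := by linarith
    have hratio : (τb⁻¹ * L / ((τb⁻¹ - 1) * L)) * (τa⁻¹ * L / ((τa⁻¹ - 1) * L))
        = ((1 - τb) * (1 - τa))⁻¹ := by
      rw [mul_div_mul_right _ _ hL.ne', mul_div_mul_right _ _ hL.ne']
      field_simp
    rw [d1, d2, d3, d4, hratio]
  -- positivity facts about the weights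
  have hfac : ∀ a ∈ Ω, ∀ b ∈ Ω, 0 < 1 - tt Ω a b ∧ 1 - tt Ω a b ≤ 1 := by
    intro a ha b hb
    exact ⟨by linarith [tt_lt_one (Ω := Ω) (x := a) hb hopen],
      by linarith [tt_nonneg (Ω := Ω) (x := a) (y := b)]⟩
  -- symmetry
  have hsymm : ∀ a ∈ Ω, ∀ b ∈ Ω, d a b = d b a := by
    intro a ha b hb
    by_cases hab : a = b
    · subst hab; rfl
    · rw [hfor a ha b hb hab, hfor b hb a ha (Ne.symm hab), mul_comm (1 - tt Ω a b)]
  -- strict positivity off the diagonal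
  have hpos : ∀ a ∈ Ω, ∀ b ∈ Ω, a ≠ b → 0 < d a b := by
    intro a ha b hb hab
    rw [hfor a ha b hb hab]
    have h1 := hfac a ha b hb
    have h2 := hfac b hb a ha
    have hτ : 0 < tt Ω a b := tt_pos hopen hbdd ha hab
    have hx0 : 0 < (1 - tt Ω a b) * (1 - tt Ω b a) := mul_pos h1.1 h2.1
    have hx1 : (1 - tt Ω a b) * (1 - tt Ω b a) < 1 := by nlinarith [h1.1, h2.1, h1.2, h2.2]
    have : 1 < ((1 - tt Ω a b) * (1 - tt Ω b a))⁻¹ := (one_lt_inv₀ hx0).2 hx1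
    have := Real.log_pos this
    linarith
  have hnn : ∀ a ∈ Ω, ∀ b ∈ Ω, 0 ≤ d a b := by
    intro a ha b hb
    by_cases hab : a = b
    · subst hab; rw [hdiag a ha]
    · exact (hpos a ha b hb hab).le
  refine ⟨hsymm, hnn, ?_, ?_⟩
  · intro a ha b hb
    constructor
    · intro h
      by_contra hab
      exact absurd h (ne_of_gt (hpos a ha b hb hab))
    · intro h; subst h; exact hdiag a ha
  -- triangle inequality
  · intro a ha b hb c hc
    by_cases hab : a = b
    · subst hab; rw [hdiag a ha]; linarith
    by_cases hbc : b = c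
    · subst hbc; rw [hdiag b hb]; linarith
    by_cases hac : a = c
    · subst hac
      rw [hdiag a ha]
      have := hnn a ha b hb
      have := hnn b hb a ha
      linarith
    rw [hfor a ha c hc hac, hfor a ha b hb hab, hfor b hb c hc hbc]
    have fab := hfac a ha b hb
    have fba := hfac b hb a ha
    have fbc := hfac b hb c hc
    have fcb := hfac c hc b hb
    have fac := hfac a ha c hc
    have fca := hfac c hc a ha
    have sub1 := one_sub_tt_mul_le hopen hconv hbdd ha hb hc
    have sub2 := one_sub_tt_mul_le hopen hconv hbdd hc hb ha
    set tab := tt Ω a b; set tba := tt Ω b a; set tbc := tt Ω b c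
    set tcb := tt Ω c b; set tac := tt Ω a c; set tca := tt Ω c a
    have hX0 : 0 < ((1 - tac) * (1 - tca))⁻¹ := inv_pos.2 (mul_pos fac.1 fca.1)
    have hY0 : 0 < (1 - tab) * (1 - tba) := mul_pos fab.1 fba.1
    have hZ0 : 0 < (1 - tbc) * (1 - tcb) := mul_pos fbc.1 fcb.1
    have hprod : ((1 - tab) * (1 - tba)) * ((1 - tbc) * (1 - tcb))
        ≤ (1 - tac) * (1 - tca) := by
      have e1 : ((1 - tab) * (1 - tba)) * ((1 - tbc) * (1 - tcb))
          = ((1 - tab) * (1 - tbc)) * ((1 - tcb) * (1 - tba)) := by ring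
      rw [e1]
      have hA : 0 ≤ (1 - tab) * (1 - tbc) := (mul_pos fab.1 fbc.1).le
      have hB : 0 ≤ (1 - tcb) * (1 - tba) := (mul_pos fcb.1 fba.1).le
      calc ((1 - tab) * (1 - tbc)) * ((1 - tcb) * (1 - tba))
          ≤ (1 - tac) * ((1 - tcb) * (1 - tba)) := mul_le_mul_of_nonneg_right sub1 hB
        _ ≤ (1 - tac) * (1 - tca) := mul_le_mul_of_nonneg_left sub2 fac.1.le
    have hinv : ((1 - tac) * (1 - tca))⁻¹
        ≤ (((1 - tab) * (1 - tba))⁻¹ * ((1 - tbc) * (1 - tcb))⁻¹) := by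
      rw [← mul_inv]
      exact inv_anti₀ (mul_pos hY0 hZ0) hprod
    have hlog := Real.log_le_log hX0 hinv
    rw [Real.log_mul (by positivity) (by positivity)] at hlog
    linarith
end
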